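/- If G and G' are finite connected simple graphs whose discrete Morse complexes 𝔐(G) and 𝔐(G') are isomorphic as simplicial complexes, then |V_G| = |V_{G'}| and |E_G| = |E_{G'}|. -/

import Mathlib

/-- `S` is a simplex of the discrete Morse complex `𝔐(G)` of the simple graph `G`
(an acyclic matching): a set of oriented edges with pairwise distinct source vertices
and containing no directed cycle. -/
def IsMorseSimplex {V : Type*} (G : SimpleGraph V) (S : Finset (V × V)) : Prop :=
  (∀ p ∈ S, G.Adj p.1 p.2) ∧
  (∀ p ∈ S, ∀ q ∈ S, p.1 = q.1 → p = q) ∧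
  (∀ v : V, ¬ Relation.TransGen (fun a b => (a, b) ∈ S) v v)

/-- The vertices of the discrete Morse complex of `G`: the oriented edges of `G`. -/
abbrev OrientedEdge {V : Type*} (G : SimpleGraph V) : Type _ := {p : V × V // G.Adj p.1 p.2}

/-- `𝔐(G)` and `𝔐(G')` are isomorphic simplicial complexes: there is a bijection
between their vertex sets carrying simplices to simplices in both directions. -/
def MorseEquiv {V W : Type*} [DecidableEq V] [DecidableEq W]
    (G : SimpleGraph V) (G' : SimpleGraph W) : Prop :=
  ∃ F : OrientedEdge G ≃ OrientedEdge G',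
    ∀ S : Finset (OrientedEdge G),
      IsMorseSimplex G (S.image Subtype.val) ↔
        IsMorseSimplex G' ((S.image F).image Subtype.val)

lemma morse_no_univ {V : Type*} [Fintype V] [DecidableEq V] (G : SimpleGraph V)
    (T : Finset (V × V)) (hT : IsMorseSimplex G T)
    (hall : ∀ v : V, ∃ w, (v, w) ∈ T) [Nonempty V] : False := by
  obtain ⟨_, _, hacy⟩ := hT
  choose f hf using hall
  set R := fun a b : V => (a, b) ∈ T with hR
  have hstep : ∀ v n, Relation.TransGen R v (f^[n+1] v) := by
    intro v n
    induction n with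
    | zero => exact Relation.TransGen.single (hf v)
    | succ n ih =>
      rw [Function.iterate_succ_apply']
      exact ih.tail (hf _)
  obtain ⟨v⟩ := ‹Nonempty V›
  have hni : ¬ Function.Injective (fun n : Fin (Fintype.card V + 1) => f^[n] v) := by
    intro hinj'
    have := Fintype.card_le_of_injective _ hinj'
    simp at this
  rw [Function.not_injective_iff] at hni
  obtain ⟨i, j, hij, hne⟩ := hni
  rcases Ne.lt_or_gt (fun hc : (i:ℕ) = j => hne (Fin.ext hc)) with hlt | hlt
  · have hx : f^[(j : ℕ) - i] (f^[i] v) = f^[i] v := by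
      rw [← Function.iterate_add_apply, Nat.sub_add_cancel hlt.le]; exact hij.symm
    have h2 := hstep (f^[(i:ℕ)] v) ((j:ℕ) - (i:ℕ) - 1)
    rw [show (j:ℕ) - (i:ℕ) - 1 + 1 = (j:ℕ) - i by omega, hx] at h2
    exact hacy _ h2
  · have hx : f^[(i : ℕ) - j] (f^[j] v) = f^[j] v := by
      rw [← Function.iterate_add_apply, Nat.sub_add_cancel hlt.le]; exact hij
    have h2 := hstep (f^[(j:ℕ)] v) ((i:ℕ) - (j:ℕ) - 1)
    rw [show (i:ℕ) - (j:ℕ) - 1 + 1 = (i:ℕ) - j by omega, hx] at h2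
    exact hacy _ h2

lemma morse_card_le {V : Type*} [Fintype V] [DecidableEq V] (G : SimpleGraph V)
    (T : Finset (V × V)) (hT : IsMorseSimplex G T) [Nonempty V] :
    T.card ≤ Fintype.card V - 1 := by
  have hinj : Set.InjOn Prod.fst T := fun p hp q hq hpq => hT.2.1 p hp q hq hpq
  have hcard : T.card = (T.image Prod.fst).card := (Finset.card_image_of_injOn hinj).symm
  have hne : T.image Prod.fst ≠ Finset.univ := by
    intro heq
    refine morse_no_univ G T hT (fun v => ?_)
    have : v ∈ T.image Prod.fst := heq ▸ Finset.mem_univ v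
    obtain ⟨p, hp, hpv⟩ := Finset.mem_image.mp this
    exact ⟨p.2, by rwa [← hpv, Prod.mk.eta]⟩
  have hlt : (T.image Prod.fst).card < Fintype.card V := by
    rcases Finset.lt_iff_ssubset.mpr ((Finset.ssubset_univ_iff).mpr hne) with h
    simpa [Finset.card_univ] using Finset.card_lt_card ((Finset.ssubset_univ_iff).mpr hne)
  omega

lemma exists_closer {V : Type*} (G : SimpleGraph V) (hG : G.Connected) (r v : V)
    (hv : v ≠ r) : ∃ w, G.Adj v w ∧ G.dist w r < G.dist v r := by
  have hd : G.dist v r ≠ 0 := by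
    simp [hG.dist_eq_zero_iff, hv]
  obtain ⟨p, hp⟩ := SimpleGraph.exists_walk_of_dist_ne_zero hd
  cases p with
  | nil => simp at hp; simp_all
  | cons h q =>
    refine ⟨_, h, ?_⟩
    have := SimpleGraph.dist_le q
    simp [SimpleGraph.Walk.length_cons] at hp
    omega

lemma exists_spanning {V : Type*} [Fintype V] [DecidableEq V] (G : SimpleGraph V)
    (hG : G.Connected) :
    ∃ T : Finset (V × V), IsMorseSimplex G T ∧ T.card = Fintype.card V - 1 := by
  have : Nonempty V := hG.nonempty
  obtain ⟨r⟩ := this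
  have hch : ∀ v : V, v ≠ r → ∃ w, G.Adj v w ∧ G.dist w r < G.dist v r :=
    fun v hv => exists_closer G hG r v hv
  classical
  choose! f hf1 hf2 using hch
  refine ⟨(Finset.univ.erase r).image (fun v => (v, f v)), ⟨?_, ?_, ?_⟩, ?_⟩
  · intro p hp
    obtain ⟨v, hv, rfl⟩ := Finset.mem_image.mp hp
    exact hf1 v (Finset.ne_of_mem_erase hv)
  · intro p hp q hq hpq
    obtain ⟨v, hv, rfl⟩ := Finset.mem_image.mp hp
    obtain ⟨w, hw, rfl⟩ := Finset.mem_image.mp hq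
    simp only at hpq
    subst hpq; rfl
  · intro v hv
    have key : ∀ a b, Relation.TransGen
        (fun a b => (a, b) ∈ (Finset.univ.erase r).image (fun v => (v, f v))) a b →
        G.dist b r < G.dist a r := by
      intro a b hab
      induction hab with
      | single hs =>
        obtain ⟨v', hv', he⟩ := Finset.mem_image.mp hs
        obtain ⟨h1, h2⟩ := Prod.mk.injEq .. |>.mp he
        subst h1; subst h2
        exact hf2 _ (Finset.ne_of_mem_erase hv')
      | tail _ hs ih =>
        obtain ⟨v', hv', he⟩ := Finset.mem_image.mp hs
        obtain ⟨h1, h2⟩ := Prod.mk.injEq .. |>.mp he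
        subst h1; subst h2
        exact lt_trans (hf2 _ (Finset.ne_of_mem_erase hv')) ih
    exact absurd (key v v hv) (lt_irrefl _)
  · rw [Finset.card_image_of_injOn (fun a _ b _ hab => (Prod.mk.injEq ..).mp hab |>.1)]
    simp [Finset.card_erase_of_mem]

def dart_equiv {V : Type*} (G : SimpleGraph V) : G.Dart ≃ OrientedEdge G where
  toFun d := ⟨d.toProd, d.adj⟩
  invFun p := ⟨p.1, p.2⟩
  left_inv d := rfl
  right_inv p := rfl

lemma card_oriented {V : Type*} [Fintype V] [DecidableEq V] (G : SimpleGraph V)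
    [DecidableRel G.Adj] : Fintype.card (OrientedEdge G) = 2 * G.edgeFinset.card := by
  rw [← Fintype.card_congr (dart_equiv G)]
  exact SimpleGraph.dart_card_eq_twice_card_edges G

lemma lift_simplex {V : Type*} [Fintype V] [DecidableEq V] (G : SimpleGraph V)
    [DecidableRel G.Adj] (T : Finset (V × V)) (hT : IsMorseSimplex G T) :
    ∃ S : Finset (OrientedEdge G), S.image Subtype.val = T ∧ S.card = T.card := by
  refine ⟨Finset.univ.filter (fun e => e.val ∈ T), ?_, ?_⟩
  · ext p
    simp only [Finset.mem_image, Finset.mem_filter, Finset.mem_univ, true_and]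
    constructor
    · rintro ⟨e, he, rfl⟩; exact he
    · intro hp; exact ⟨⟨p, hT.1 p hp⟩, hp, rfl⟩
  · have : (Finset.univ.filter (fun e : OrientedEdge G => e.val ∈ T)).card
        = ((Finset.univ.filter (fun e : OrientedEdge G => e.val ∈ T)).image Subtype.val).card :=
      (Finset.card_image_of_injective _ Subtype.val_injective).symm
    rw [this]
    congr 1
    ext p
    simp only [Finset.mem_image, Finset.mem_filter, Finset.mem_univ, true_and]
    constructor
    · rintro ⟨e, he, rfl⟩; exact he
    · intro hp; exact ⟨⟨p, hT.1 p hp⟩, hp, rfl⟩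

lemma morse_dir {V W : Type*} [Fintype V] [DecidableEq V] [Fintype W] [DecidableEq W]
    (G : SimpleGraph V) (G' : SimpleGraph W) [DecidableRel G.Adj] [DecidableRel G'.Adj]
    (hG : G.Connected) (hnW : Nonempty W)
    (F : OrientedEdge G ≃ OrientedEdge G')
    (hF : ∀ S : Finset (OrientedEdge G),
      IsMorseSimplex G (S.image Subtype.val) →
        IsMorseSimplex G' ((S.image F).image Subtype.val)) :
    Fintype.card V - 1 ≤ Fintype.card W - 1 := by
  have : Nonempty V := hG.nonempty
  obtain ⟨T, hT, hTcard⟩ := exists_spanning G hG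
  obtain ⟨S, hSval, hScard⟩ := lift_simplex G T hT
  have h1 := hF S (hSval ▸ hT)
  have hc : ((S.image F).image Subtype.val).card = S.card := by
    rw [Finset.card_image_of_injective _ Subtype.val_injective,
      Finset.card_image_of_injective _ F.injective]
  have h2 := morse_card_le G' ((S.image F).image Subtype.val) h1
  omega

/-- If two finite connected simple graphs have isomorphic discrete Morse complexes,
then they have the same number of vertices and the same number of edges. -/
theorem stmt_3 {V W : Type*} [Fintype V] [DecidableEq V] [Fintype W] [DecidableEq W]
    (G : SimpleGraph V) (G' : SimpleGraph W) [DecidableRel G.Adj] [DecidableRel G'.Adj]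
    (hG : G.Connected) (hG' : G'.Connected) (h : MorseEquiv G G') :
    Fintype.card V = Fintype.card W ∧ G.edgeFinset.card = G'.edgeFinset.card := by
  obtain ⟨F, hF⟩ := h
  have hnV : Nonempty V := hG.nonempty
  have hnW : Nonempty W := hG'.nonempty
  have hE : G.edgeFinset.card = G'.edgeFinset.card := by
    have h1 := card_oriented G
    have h2 := card_oriented G'
    have h3 : Fintype.card (OrientedEdge G) = Fintype.card (OrientedEdge G') :=
      Fintype.card_congr F
    omega
  refine ⟨?_, hE⟩
  have le1 := morse_dir G G' hG hnW F (fun S hS => (hF S).mp hS)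
  have le2 : Fintype.card W - 1 ≤ Fintype.card V - 1 := by
    refine morse_dir G' G hG' hnV F.symm (fun S' hS' => ?_)
    have h3 := (hF (S'.image F.symm)).mpr ?_
    · exact h3
    · have h4 : (S'.image F.symm).image F = S' := by
        rw [Finset.image_image]
        simp [Function.comp_def]
      rwa [h4]
  have := Fintype.card_pos (α := V)
  have := Fintype.card_pos (α := W)
  omega
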